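/- Let G be the graph with vertex set T and edges {t't : t' ∈ A*_t}. Then G admits no proper colouring c : T → ℕ; that is, for every function c : T → ℕ there exist two adjacent vertices t, t' of G with c(t) = c(t'). -/

import Mathlib

/-- An element of the tree `T`: an injective, co-infinite sequence `t : α → ℕ`
(with `ℕ = {1,2,3,…}`) of countable ordinal length `α`.  We encode such a
sequence as a total function `f : Ordinal → ℕ` taking a *positive* value
exactly on the ordinals `β < len` (the value `0` plays the role of
"undefined", which is harmless since the paper's `ℕ` starts at `1`). -/
structure CSeq where
  /-- the length (domain) of the sequence, a countable ordinal -/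
  len : Ordinal
  len_countable : len < Ordinal.omega 1
  /-- the sequence itself, with `f β = 0` meaning "β is outside the domain" -/
  f : Ordinal → ℕ
  dom_iff : ∀ β, β < len ↔ f β ≠ 0
  inj : ∀ β γ, β < len → γ < len → f β = f γ → β = γ
  coinf : {n : ℕ | n ≠ 0 ∧ n ∉ Set.range f}.Infinite

namespace CSeq

/-- the extension order on `T`: `s ≤ t` iff `s = t ↾ dom s`. -/
def Ext (s t : CSeq) : Prop := ∀ β, s.f β ≠ 0 → t.f β = s.f β

/-- strict extension: `s < t`. -/
def ExtLt (s t : CSeq) : Prop := s.Ext t ∧ s ≠ t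

/-- the image `im t ⊆ ℕ = {1,2,…}` of a sequence `t`. -/
def im (t : CSeq) : Set ℕ := {n | n ≠ 0 ∧ n ∈ Set.range t.f}

/-- `t ∈ Σ(T)`: the length of `t` is a successor ordinal. -/
def IsSucc (t : CSeq) : Prop := ∃ α, t.len = α + 1

/-- `last t`: the last value of a sequence (of successor length). -/
noncomputable def lastVal (t : CSeq) : ℕ := t.f (Ordinal.pred t.len)

/-- the restriction `t ↾ γ` of a sequence `t` to an initial segment `γ ≤ dom t`. -/
noncomputable def restrict (t : CSeq) (γ : Ordinal) (h : γ ≤ t.len) : CSeq where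
  len := γ
  len_countable := lt_of_le_of_lt h t.len_countable
  f := fun β => if β < γ then t.f β else 0
  dom_iff := by
    intro β
    constructor
    · intro hβ
      simpa [hβ] using (t.dom_iff β).1 (lt_of_lt_of_le hβ h)
    · intro hβ
      by_contra hc
      simp [hc] at hβ
  inj := by
    intro β γ' hβ hγ
    simp only [if_pos hβ, if_pos hγ]
    exact t.inj β γ' (lt_of_lt_of_le hβ h) (lt_of_lt_of_le hγ h)
  coinf := t.coinf.mono (by
    rintro n ⟨hn0, hn⟩
    refine ⟨hn0, ?_⟩
    rintro ⟨β, hβ⟩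
    by_cases hb : β < γ
    · exact hn ⟨β, by simpa [hb] using hβ⟩
    · simp only [if_neg hb] at hβ
      exact hn0 hβ.symm)

/-- `t* := t ↾ α` for `t` of successor length `α + 1`: the immediate
predecessor of `t` in the tree. -/
noncomputable def star (t : CSeq) : CSeq := t.restrict (Ordinal.pred t.len) (Ordinal.pred_le_self _)

/-- `A_t := {s ≤ t : s ∈ Σ(T), last s = min (im t \ im s*)}`. -/
def A (t : CSeq) : Set CSeq :=
  {s | s.Ext t ∧ s.IsSucc ∧ s.lastVal = sInf (t.im \ s.star.im)}

/-- `A*_t := {s* : s ∈ A_t}`. -/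
def Astar (t : CSeq) : Set CSeq := star '' A t

/-- the graph `G` with vertex set `T` and edges `{t't : t' ∈ A*_t}`. -/
def G : SimpleGraph CSeq := SimpleGraph.fromRel (fun t' t => t' ∈ Astar t)

/-- the graph `G'` with vertex set `T` and edges `{t't : t' ∈ A_t}`. -/
def G' : SimpleGraph CSeq := SimpleGraph.fromRel (fun t' t => t' ∈ A t)

/-- two `t`–`t'` paths are independent (internally disjoint) if they share no
vertices other than `t` and `t'`. -/
def InternallyDisjoint {t t' : CSeq} (p q : G.Path t t') : Prop :=
  ∀ v, v ∈ p.1.support → v ∈ q.1.support → v = t ∨ v = t'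

/-- `t'` is a `k`-extension of `t ∈ Σ(T)` if `t' > t` and every element of
`im t' \ im t` is greater than `a_{k+1}`, where `a_1 < … < a_{k+1}` are the
`k+1` smallest elements of `ℕ \ (im t ∪ [last t])`.  (Recall `Nat.nth p k` is
the `(k+1)`-st element of `{n | p n}` in increasing order.) -/
def IsKExt (k : ℕ) (t t' : CSeq) : Prop :=
  t.ExtLt t' ∧ ∀ n ∈ t'.im \ t.im,
    Nat.nth (fun m => m ∉ t.im ∧ t.lastVal < m) k < n

end CSeq


namespace CSeq

theorem ext' {s t : CSeq} (h1 : s.len = t.len) (h2 : s.f = t.f) : s = t := by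
  cases s; cases t; dsimp at h1 h2; subst h1; subst h2; rfl

theorem lt_succ_self (o : Ordinal) : o < o + 1 := by
  rw [Ordinal.add_one_eq_succ]; exact Order.lt_succ _

theorem lt_succ_iff' {a o : Ordinal} : a < o + 1 ↔ a ≤ o := by
  rw [Ordinal.add_one_eq_succ, Order.lt_succ_iff]

theorem succ_lt_omega1 {o : Ordinal} (h : o < Ordinal.omega 1) : o + 1 < Ordinal.omega 1 := by
  have hl : Order.IsSuccLimit (Ordinal.omega 1) := by
    rw [← Cardinal.ord_aleph]; exact Cardinal.isSuccLimit_ord (Cardinal.aleph0_le_aleph 1)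
  rw [Ordinal.add_one_eq_succ]
  exact hl.succ_lt h

/-- A *clean `N`-extension* `v` of `s`: a proper extension all of whose fresh values
exceed `N`, with the value at position `s.len` minimal among the fresh values. -/
def Clean (N : ℕ) (s v : CSeq) : Prop :=
  s.Ext v ∧ s.len < v.len ∧ ∀ x ∈ v.im \ s.im, N < x ∧ v.f s.len ≤ x

theorem head_mem {N : ℕ} {s v : CSeq} (h : Clean N s v) : v.f s.len ∈ v.im \ s.im := by
  obtain ⟨hext, hlen, -⟩ := h
  have hne : v.f s.len ≠ 0 := (v.dom_iff s.len).1 hlen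
  refine ⟨⟨hne, ⟨s.len, rfl⟩⟩, ?_⟩
  rintro ⟨-, β, hβ⟩
  have hsβ : s.f β ≠ 0 := by rw [hβ]; exact hne
  have hβlt : β < s.len := (s.dom_iff β).2 hsβ
  have : v.f β = v.f s.len := by rw [hext β hsβ, hβ]
  have := v.inj β s.len (hβlt.trans hlen) hlen this
  exact absurd this (ne_of_lt hβlt)

theorem clean_adj {N : ℕ} {s v : CSeq} (h : Clean N s v) : G.Adj s v := by
  obtain ⟨hext, hlen, hmin⟩ := h
  have hhead := head_mem ⟨hext, hlen, hmin⟩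
  have hsucc_le : s.len + 1 ≤ v.len := by
    rw [Ordinal.add_one_eq_succ, Order.succ_le_iff]; exact hlen
  set w := v.restrict (s.len + 1) hsucc_le with hw
  have hwlen : w.len = s.len + 1 := rfl
  have hpred : Ordinal.pred w.len = s.len := by
    rw [hwlen, Ordinal.add_one_eq_succ, Ordinal.pred_succ]
  have hstar : w.star = s := by
    refine ext' ?_ ?_
    · show Ordinal.pred w.len = s.len
      exact hpred
    · funext β
      show (if β < Ordinal.pred w.len then w.f β else 0) = s.f β
      rw [hpred]
      by_cases hb : β < s.len
      · rw [if_pos hb]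
        have hsβ : s.f β ≠ 0 := (s.dom_iff β).1 hb
        show (if β < s.len + 1 then v.f β else 0) = s.f β
        rw [if_pos (hb.trans (lt_succ_self _))]
        exact hext β hsβ
      · rw [if_neg hb]
        by_contra hc
        exact hb ((s.dom_iff β).2 fun h0 => hc h0.symm)
  have hlast : w.lastVal = v.f s.len := by
    show w.f (Ordinal.pred w.len) = v.f s.len
    rw [hpred]
    show (if s.len < s.len + 1 then v.f s.len else 0) = v.f s.len
    rw [if_pos (lt_succ_self _)]
  have hwext : w.Ext v := by
    intro β hβ
    have hb : β < s.len + 1 := by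
      by_contra hb
      exact hβ (if_neg hb)
    show v.f β = (if β < s.len + 1 then v.f β else 0)
    rw [if_pos hb]
  have hinf : sInf (v.im \ s.im) = v.f s.len := by
    refine le_antisymm (Nat.sInf_le hhead) (le_csInf ⟨_, hhead⟩ fun x hx => (hmin x hx).2)
  have hwA : w ∈ A v := ⟨hwext, ⟨s.len, hwlen⟩, by rw [hstar, hlast, hinf]⟩
  have hmem : s ∈ Astar v := ⟨w, hwA, hstar⟩
  have hsnev : s ≠ v := by
    intro he
    rw [he] at hlen
    exact lt_irrefl _ hlen
  exact (SimpleGraph.fromRel_adj _ _ _).2 ⟨hsnev, Or.inl hmem⟩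

/-- appending one fresh value `a` to `s`. -/
noncomputable def snoc (s : CSeq) (a : ℕ) (ha0 : a ≠ 0) (har : a ∉ Set.range s.f) : CSeq where
  len := s.len + 1
  len_countable := succ_lt_omega1 s.len_countable
  f := fun β => if β = s.len then a else s.f β
  dom_iff := by
    intro β
    by_cases hb : β = s.len
    · subst hb
      simp [ha0, lt_succ_self]
    · simp only [if_neg hb]
      rw [← s.dom_iff β, lt_succ_iff']
      constructor
      · exact fun h => lt_of_le_of_ne h hb
      · exact fun h => le_of_lt h
  inj := by
    intro β γ hβ hγ heq
    by_cases hb : β = s.len <;> by_cases hg : γ = s.len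
    · rw [hb, hg]
    · rw [if_pos hb, if_neg hg] at heq
      exact absurd ⟨γ, heq.symm⟩ har
    · rw [if_neg hb, if_pos hg] at heq
      exact absurd ⟨β, heq⟩ har
    · rw [if_neg hb, if_neg hg] at heq
      rw [lt_succ_iff'] at hβ hγ
      exact s.inj β γ (lt_of_le_of_ne hβ hb) (lt_of_le_of_ne hγ hg) heq
  coinf := by
    refine ((s.coinf.diff (Set.finite_singleton a)).mono ?_)
    rintro n ⟨⟨hn0, hnr⟩, hna⟩
    refine ⟨hn0, ?_⟩
    rintro ⟨β, hβ⟩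
    dsimp only at hβ
    by_cases hb : β = s.len
    · rw [if_pos hb] at hβ
      exact hna (Set.mem_singleton_iff.2 hβ.symm)
    · rw [if_neg hb] at hβ
      exact hnr ⟨β, hβ⟩

theorem clean_exists (s : CSeq) (N : ℕ) : ∃ v, Clean N s v := by
  obtain ⟨a, ⟨ha0, har⟩, haN⟩ := s.coinf.exists_gt N
  have hslen0 : s.f s.len = 0 := by
    by_contra h0
    exact lt_irrefl _ ((s.dom_iff s.len).2 h0)
  have hhead : (snoc s a ha0 har).f s.len = a := by
    show (if s.len = s.len then a else s.f s.len) = a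
    rw [if_pos rfl]
  refine ⟨snoc s a ha0 har, ?_, lt_succ_self _, ?_⟩
  · intro β hβ
    have hb : β ≠ s.len := fun he => hβ (he ▸ hslen0)
    show (if β = s.len then a else s.f β) = s.f β
    rw [if_neg hb]
  · intro x hx
    have hxa : x = a := by
      obtain ⟨⟨hx0, β, hβ⟩, hxs⟩ := hx
      have hβ' : (if β = s.len then a else s.f β) = x := hβ
      by_cases hb : β = s.len
      · rw [if_pos hb] at hβ'
        exact hβ'.symm
      · rw [if_neg hb] at hβ'
        exact absurd ⟨hx0, ⟨β, hβ'⟩⟩ hxs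
    rw [hhead, hxa]
    exact ⟨haN, le_refl a⟩


attribute [local instance] Classical.propDecidable

universe u

theorem ext_refl (s : CSeq) : s.Ext s := fun _ _ => rfl

theorem ext_trans {s t u : CSeq} (h1 : s.Ext t) (h2 : t.Ext u) : s.Ext u := by
  intro β hβ
  have ht : t.f β = s.f β := h1 β hβ
  have htne : t.f β ≠ 0 := by rw [ht]; exact hβ
  rw [h2 β htne, ht]

noncomputable def emptySeq : CSeq where
  len := 0
  len_countable := by
    have hl : Order.IsSuccLimit (Ordinal.omega 1) := by
      rw [← Cardinal.ord_aleph]; exact Cardinal.isSuccLimit_ord (Cardinal.aleph0_le_aleph 1)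
    exact hl.bot_lt
  f := fun _ => 0
  dom_iff := by intro β; simp [(zero_le (a := β)).not_gt]
  inj := by intro β γ hβ _ _; exact absurd hβ (zero_le (a := β)).not_gt
  coinf := by
    refine ((Set.finite_singleton 0).infinite_compl).mono ?_
    intro n hn
    have hn0 : n ≠ 0 := fun h => hn (Set.mem_singleton_iff.2 h)
    exact ⟨hn0, by rintro ⟨β, hβ⟩; exact hn0 hβ.symm⟩

noncomputable def stepv (c : CSeq → ℕ) (s : CSeq) (N n : ℕ) : CSeq :=
  if h : ∃ v, Clean N s v ∧ c v = n then h.choose else (clean_exists s N).choose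

theorem stepv_clean (c : CSeq → ℕ) (s : CSeq) (N n : ℕ) : Clean N s (stepv c s N n) := by
  unfold stepv
  split
  · next h => exact h.choose_spec.1
  · exact (clean_exists s N).choose_spec

theorem stepv_color (c : CSeq → ℕ) (s : CSeq) (N n : ℕ)
    (h : ∃ v, Clean N s v ∧ c v = n) : c (stepv c s N n) = n := by
  unfold stepv
  rw [dif_pos h]
  exact h.choose_spec.2

noncomputable def chain (c : CSeq → ℕ) : ℕ → CSeq × ℕ
  | 0 => (emptySeq, 0)
  | n + 1 =>
    let p := chain c n
    let v := stepv c p.1 p.2 n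
    (v, max (max p.2 (v.f p.1.len)) ((v.coinf.exists_gt n).choose))

noncomputable def cs (c : CSeq → ℕ) (n : ℕ) : CSeq := (chain c n).1
noncomputable def cN (c : CSeq → ℕ) (n : ℕ) : ℕ := (chain c n).2
noncomputable def pick (c : CSeq → ℕ) (n : ℕ) : ℕ := ((cs c (n+1)).coinf.exists_gt n).choose

theorem cs_succ (c : CSeq → ℕ) (n : ℕ) : cs c (n+1) = stepv c (cs c n) (cN c n) n := rfl

theorem cN_succ (c : CSeq → ℕ) (n : ℕ) :
    cN c (n+1) = max (max (cN c n) ((cs c (n+1)).f ((cs c n).len))) (pick c n) := rfl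

theorem clean_chain (c : CSeq → ℕ) (n : ℕ) : Clean (cN c n) (cs c n) (cs c (n+1)) := by
  rw [cs_succ]
  exact stepv_clean c (cs c n) (cN c n) n

theorem pick_ne_zero (c : CSeq → ℕ) (n : ℕ) : pick c n ≠ 0 :=
  ((cs c (n+1)).coinf.exists_gt n).choose_spec.1.1

theorem pick_not_mem (c : CSeq → ℕ) (n : ℕ) : pick c n ∉ Set.range (cs c (n+1)).f :=
  ((cs c (n+1)).coinf.exists_gt n).choose_spec.1.2

theorem pick_gt (c : CSeq → ℕ) (n : ℕ) : n < pick c n :=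
  ((cs c (n+1)).coinf.exists_gt n).choose_spec.2

theorem cN_le_succ (c : CSeq → ℕ) (n : ℕ) : cN c n ≤ cN c (n+1) := by
  rw [cN_succ]
  exact le_trans (le_max_left _ _) (le_max_left _ _)

theorem head_le (c : CSeq → ℕ) (n : ℕ) : (cs c (n+1)).f ((cs c n).len) ≤ cN c (n+1) := by
  rw [cN_succ]
  exact le_trans (le_max_right _ _) (le_max_left _ _)

theorem pick_le (c : CSeq → ℕ) (n : ℕ) : pick c n ≤ cN c (n+1) := by
  rw [cN_succ]
  exact le_max_right _ _

theorem cN_mono (c : CSeq → ℕ) {m n : ℕ} (h : m ≤ n) : cN c m ≤ cN c n := by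
  obtain ⟨d, rfl⟩ := Nat.le.dest h
  clear h
  induction d with
  | zero => exact le_refl _
  | succ k ih => exact le_trans ih (cN_le_succ c (m + k))

theorem ext_le (c : CSeq → ℕ) {m n : ℕ} (h : m ≤ n) : (cs c m).Ext (cs c n) := by
  obtain ⟨d, rfl⟩ := Nat.le.dest h
  clear h
  induction d with
  | zero => exact ext_refl _
  | succ k ih => exact ext_trans ih (clean_chain c (m + k)).1

theorem cs_stable (c : CSeq → ℕ) {m n : ℕ} {β : Ordinal} (h : (cs c m).f β ≠ 0)
    (hmn : m ≤ n) : (cs c n).f β = (cs c m).f β := ext_le c hmn β h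

theorem im_mono (c : CSeq → ℕ) {m n : ℕ} (h : m ≤ n) : (cs c m).im ⊆ (cs c n).im := by
  rintro x ⟨hx0, β, hβ⟩
  have hne : (cs c m).f β ≠ 0 := by rw [hβ]; exact hx0
  exact ⟨hx0, β, by rw [cs_stable c hne h, hβ]⟩

theorem escape (c : CSeq → ℕ) (x : ℕ) (m : ℕ) : ∀ n, x ∈ (cs c n).im → x ∉ (cs c m).im →
    ∃ j, m ≤ j ∧ x ∈ (cs c (j+1)).im ∧ x ∉ (cs c j).im := by
  intro n
  induction n with
  | zero => exact fun h hm => absurd (im_mono c (Nat.zero_le m) h) hm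
  | succ k ih =>
    intro h hm
    by_cases hk : x ∈ (cs c k).im
    · exact ih hk hm
    · refine ⟨k, ?_, h, hk⟩
      by_contra hlt
      push_neg at hlt
      exact hm (im_mono c (Nat.succ_le_of_lt hlt) h)

theorem fresh_gt (c : CSeq → ℕ) {x n m : ℕ} (hn : x ∈ (cs c n).im) (hm : x ∉ (cs c m).im) :
    cN c m < x := by
  obtain ⟨j, hj, hj1, hj0⟩ := escape c x m n hn hm
  have h := (clean_chain c j).2.2 x ⟨hj1, hj0⟩
  exact lt_of_le_of_lt (cN_mono c hj) h.1

noncomputable def bigU (c : CSeq → ℕ) : CSeq where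
  len := ⨆ n, (cs c n).len
  len_countable := by
    refine Ordinal.iSup_lt_ord_lift (c := Ordinal.omega 1) ?_ (fun n => (cs c n).len_countable)
    rw [← Cardinal.ord_aleph, Cardinal.isRegular_aleph_one.cof_eq]
    simpa using Cardinal.aleph0_lt_aleph_one
  f := fun β => if h : ∃ n, (cs c n).f β ≠ 0 then (cs c h.choose).f β else 0
  dom_iff := by
    intro β
    have hiff : (if h : ∃ n, (cs c n).f β ≠ 0 then (cs c h.choose).f β else 0) ≠ 0 ↔
        ∃ n, (cs c n).f β ≠ 0 := by
      by_cases h : ∃ n, (cs c n).f β ≠ 0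
      · rw [dif_pos h]
        exact ⟨fun _ => h, fun _ => h.choose_spec⟩
      · rw [dif_neg h]
        simp [h]
    constructor
    · intro hb
      obtain ⟨n, hn⟩ := Ordinal.lt_iSup_iff.1 hb
      exact hiff.2 ⟨n, ((cs c n).dom_iff β).1 hn⟩
    · intro hne
      obtain ⟨n, hn⟩ := hiff.1 hne
      exact Ordinal.lt_iSup_iff.2 ⟨n, ((cs c n).dom_iff β).2 hn⟩
  inj := by
    intro β γ hβ hγ heq
    obtain ⟨nβ, hβ'⟩ := Ordinal.lt_iSup_iff.1 hβ
    obtain ⟨nγ, hγ'⟩ := Ordinal.lt_iSup_iff.1 hγ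
    have hB : ∃ n, (cs c n).f β ≠ 0 := ⟨nβ, ((cs c nβ).dom_iff β).1 hβ'⟩
    have hC : ∃ n, (cs c n).f γ ≠ 0 := ⟨nγ, ((cs c nγ).dom_iff γ).1 hγ'⟩
    have heq' : (if h : ∃ n, (cs c n).f β ≠ 0 then (cs c h.choose).f β else 0)
        = (if h : ∃ n, (cs c n).f γ ≠ 0 then (cs c h.choose).f γ else 0) := heq
    rw [dif_pos hB, dif_pos hC] at heq'
    have e1 : (cs c (max hB.choose hC.choose)).f β = (cs c hB.choose).f β :=
      cs_stable c hB.choose_spec (le_max_left _ _)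
    have e2 : (cs c (max hB.choose hC.choose)).f γ = (cs c hC.choose).f γ :=
      cs_stable c hC.choose_spec (le_max_right _ _)
    have heqk : (cs c (max hB.choose hC.choose)).f β = (cs c (max hB.choose hC.choose)).f γ := by
      rw [e1, e2, heq']
    refine (cs c (max hB.choose hC.choose)).inj β γ ?_ ?_ heqk
    · exact ((cs c _).dom_iff β).2 (by rw [e1]; exact hB.choose_spec)
    · exact ((cs c _).dom_iff γ).2 (by rw [e2]; exact hC.choose_spec)
  coinf := by
    apply Set.infinite_of_forall_exists_gt
    intro b
    refine ⟨pick c b, ⟨pick_ne_zero c b, ?_⟩, pick_gt c b⟩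
    rintro ⟨β, hβ⟩
    have hβ' : (if h : ∃ n, (cs c n).f β ≠ 0 then (cs c h.choose).f β else 0) = pick c b := hβ
    have hex : ∃ n, (cs c n).f β ≠ 0 := by
      by_contra h
      rw [dif_neg h] at hβ'
      exact pick_ne_zero c b hβ'.symm
    rw [dif_pos hex] at hβ'
    have him : pick c b ∈ (cs c hex.choose).im := ⟨pick_ne_zero c b, β, hβ'⟩
    have hnot : pick c b ∉ (cs c (b+1)).im := by
      rintro ⟨-, β', hβ''⟩
      exact pick_not_mem c b ⟨β', hβ''⟩
    exact absurd (pick_le c b) (not_le_of_gt (fresh_gt c him hnot))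

theorem bigU_stable (c : CSeq → ℕ) {n : ℕ} {β : Ordinal} (h : (cs c n).f β ≠ 0) :
    (bigU c).f β = (cs c n).f β := by
  have hex : ∃ k, (cs c k).f β ≠ 0 := ⟨n, h⟩
  show (if h : ∃ k, (cs c k).f β ≠ 0 then (cs c h.choose).f β else 0) = _
  rw [dif_pos hex]
  have h1 : (cs c (max hex.choose n)).f β = (cs c hex.choose).f β :=
    cs_stable c hex.choose_spec (le_max_left _ _)
  have h2 : (cs c (max hex.choose n)).f β = (cs c n).f β :=
    cs_stable c h (le_max_right _ _)
  rw [← h1, h2]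

theorem clean_bigU (c : CSeq → ℕ) (n : ℕ) : Clean (cN c n) (cs c n) (bigU c) := by
  refine ⟨fun β hβ => bigU_stable c hβ, ?_, ?_⟩
  · exact lt_of_lt_of_le (clean_chain c n).2.1 (Ordinal.le_iSup (fun k => (cs c k).len) (n+1))
  · intro x hx
    obtain ⟨hxim, hxnot⟩ := hx
    have hheadne : (cs c (n+1)).f ((cs c n).len) ≠ 0 :=
      ((cs c (n+1)).dom_iff _).1 (clean_chain c n).2.1
    have hhead : (bigU c).f ((cs c n).len) = (cs c (n+1)).f ((cs c n).len) := bigU_stable c hheadne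
    obtain ⟨hx0, β, hβ⟩ := hxim
    have hβ' : (if h : ∃ k, (cs c k).f β ≠ 0 then (cs c h.choose).f β else 0) = x := hβ
    have hex : ∃ k, (cs c k).f β ≠ 0 := by
      by_contra h
      rw [dif_neg h] at hβ'
      exact hx0 hβ'.symm
    rw [dif_pos hex] at hβ'
    have hxim' : x ∈ (cs c hex.choose).im := ⟨hx0, β, hβ'⟩
    by_cases hx1 : x ∈ (cs c (n+1)).im
    · have h := (clean_chain c n).2.2 x ⟨hx1, hxnot⟩
      exact ⟨h.1, by rw [hhead]; exact h.2⟩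
    · have hgt : cN c (n+1) < x := fresh_gt c hxim' hx1
      refine ⟨lt_of_le_of_lt (cN_le_succ c n) hgt, ?_⟩
      rw [hhead]
      exact le_trans (head_le c n) (le_of_lt hgt)

end CSeq

open CSeq in
/-- The graph `G` admits no proper colouring `c : T → ℕ`:
for every `c : T → ℕ` there are adjacent vertices with the same colour. -/
theorem stmt0 :
    ∀ c : CSeq → ℕ, ∃ t t' : CSeq, G.Adj t t' ∧ c t = c t' := by
  intro c
  by_cases h : ∃ v, Clean (cN c (c (bigU c))) (cs c (c (bigU c))) v ∧ c v = c (bigU c)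
  · refine ⟨cs c (c (bigU c) + 1), bigU c, clean_adj (clean_bigU c (c (bigU c) + 1)), ?_⟩
    rw [cs_succ]
    exact stepv_color c (cs c (c (bigU c))) (cN c (c (bigU c))) (c (bigU c)) h
  · exact absurd ⟨bigU c, clean_bigU c (c (bigU c)), rfl⟩ h
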